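/- Fix integers r ≥ 1 and t ≥ 2, and fix a t-core ρ ∈ Par_{r,rt} with a_i = a_i(ρ) for 0 ≤ i ≤ t−1 (every t-core with at most r parts lies in Par_{r,rt}). Then lim_{s→∞} #{λ ∈ Par_{r,s} : core_t(λ) = ρ} / C(r+s, r) = (1/t^r) · r!/(a_0! a_1! ··· a_{t−1}!). -/

import Mathlib

open Finset

/-- Partitions in the `r × s` rectangle: weakly decreasing `r`-tuples with parts at most `s`. -/
def IsRectPartition (r s : ℕ) (lam : Fin r → ℕ) : Prop :=
  (∀ i j : Fin r, i ≤ j → lam j ≤ lam i) ∧ ∀ i, lam i ≤ s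

/-- The beta-set `β(λ) = {λ_i + r − i : 1 ≤ i ≤ r}` (with 0-indexed `i`). -/
def betaSet (r : ℕ) (lam : Fin r → ℕ) : Finset ℕ :=
  Finset.image (fun i : Fin r => lam i + (r - 1 - (i : ℕ))) Finset.univ

/-- `λ` is a `t`-core: for every `b ∈ β(λ)` with `b ≥ t`, also `b − t ∈ β(λ)`. -/
def IsTCore (r t : ℕ) (lam : Fin r → ℕ) : Prop :=
  ∀ b ∈ betaSet r lam, t ≤ b → b - t ∈ betaSet r lam

/-- `n_i = ⌊(r+s+t−1−i)/t⌋`. -/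
def nres (r s t i : ℕ) : ℕ := (r + s + t - 1 - i) / t

/-- `a_i(λ) = #{b ∈ β(λ) : b ≡ i (mod t)}`. -/
def aCount (r t : ℕ) (lam : Fin r → ℕ) (i : ℕ) : ℕ :=
  ((betaSet r lam).filter fun b => b % t = i).card

/-- The justification `J(λ)`: in each residue class `i` mod `t`, the `a_i(λ)` smallest
nonnegative integers congruent to `i`. -/
def justification (r t : ℕ) (lam : Fin r → ℕ) : Finset ℕ :=
  (Finset.range t).biUnion fun i =>
    (Finset.range (aCount r t lam i)).image fun m => i + m * t

/-- The size of the `t`-core of `λ`: `Σ_{b ∈ J(λ)} b − r(r−1)/2`. -/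
def coreSize (r t : ℕ) (lam : Fin r → ℕ) : ℕ :=
  (∑ b ∈ justification r t lam, b) - r * (r - 1) / 2

lemma lowerset_eq_range (G : Finset ℕ) (hG : ∀ m, m + 1 ∈ G → m ∈ G) :
    G = range G.card := by
  have hdc : ∀ d m, m + d ∈ G → m ∈ G := by
    intro d
    induction d with
    | zero => simpa using fun m h => h
    | succ d ih => intro m h; exact hG m (ih (m+1) (by simpa [Nat.add_comm, Nat.add_left_comm, Nat.add_assoc] using h))
  have key : ∀ k, k ∉ G → G ⊆ range k := by
    intro k hk x hx
    rw [mem_range]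
    by_contra hlt
    push_neg at hlt
    exact hk (hdc (x - k) k (by simpa [Nat.add_sub_cancel' hlt] using hx))
  ext n
  simp only [mem_range]
  constructor
  · intro hn
    have : range (n+1) ⊆ G := by
      intro x hx
      rw [mem_range, Nat.lt_succ_iff] at hx
      exact hdc (n - x) x (by simpa [Nat.add_sub_cancel' hx] using hn)
    have := Finset.card_le_card this
    simpa using this
  · intro hn
    by_contra hnG
    exact absurd (Finset.card_le_card (key n hnG)) (by simpa using hn)

lemma strictMono_gap {r : ℕ} {f : Fin r → ℕ} (hf : StrictMono f) :
    ∀ (d : ℕ) (a b : Fin r), (b : ℕ) = a + d → f a + d ≤ f b := by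
  intro d
  induction d with
  | zero => intro a b h; have : a = b := Fin.ext (by omega); simp [this]
  | succ d ih =>
    intro a b h
    have hb' : (a : ℕ) + d < r := by omega
    have h1 : f a + d ≤ f ⟨a + d, hb'⟩ := ih a ⟨a + d, hb'⟩ rfl
    have h2 : f ⟨a + d, hb'⟩ < f b := hf (by simp [Fin.lt_def]; omega)
    omega

lemma classCard {N t i : ℕ} (ht : 0 < t) (hi : i < t) (hiN : i < N) :
    ((range N).filter (fun x => x % t = i)).card = (N + t - 1 - i) / t := by
  have hK : (N + t - 1 - i) / t = (N - 1 - i) / t + 1 := by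
    have : N + t - 1 - i = (N - 1 - i) + t := by omega
    rw [this, Nat.add_div_right _ ht]
  rw [hK]
  have himg : (range N).filter (fun x => x % t = i)
      = (range ((N - 1 - i)/t + 1)).image (fun m => i + m * t) := by
    ext x
    simp only [mem_filter, mem_range, mem_image]
    constructor
    · rintro ⟨hxN, hxi⟩
      refine ⟨x / t, ?_, ?_⟩
      · rw [Nat.lt_succ_iff, Nat.le_div_iff_mul_le ht]
        have h1 := Nat.div_add_mod x t
        have h2 : x / t * t = t * (x / t) := Nat.mul_comm _ _
        omega
      · have h1 := Nat.div_add_mod x t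
        have h2 : x / t * t = t * (x / t) := Nat.mul_comm _ _
        omega
    · rintro ⟨m, hm, rfl⟩
      rw [Nat.lt_succ_iff, Nat.le_div_iff_mul_le ht] at hm
      constructor
      · omega
      · simp [Nat.add_mul_mod_self_right, Nat.mod_eq_of_lt hi]
  rw [himg, Finset.card_image_of_injective _ (fun a b hab =>
    Nat.eq_of_mul_eq_mul_right ht (Nat.add_left_cancel hab)), Finset.card_range]

lemma lim_ratio (a b : ℝ) :
    Filter.Tendsto (fun s : ℕ => ((s : ℝ) + a) / ((s : ℝ) + b)) Filter.atTop (nhds 1) := by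
  have hb : Filter.Tendsto (fun s : ℕ => ((s : ℝ) + b)) Filter.atTop Filter.atTop :=
    Filter.tendsto_atTop_add_const_right _ b tendsto_natCast_atTop_atTop
  have h0 : Filter.Tendsto (fun s : ℕ => (a - b) / ((s : ℝ) + b)) Filter.atTop (nhds 0) :=
    Filter.Tendsto.div_atTop tendsto_const_nhds hb
  have h1 : Filter.Tendsto (fun s : ℕ => 1 + (a - b) / ((s : ℝ) + b)) Filter.atTop (nhds 1) := by
    simpa using Filter.Tendsto.const_add 1 h0
  refine h1.congr' ?_
  filter_upwards [hb.eventually_gt_atTop 0] with s hs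
  have hne : (s : ℝ) + b ≠ 0 := ne_of_gt hs
  have hrw : (s : ℝ) + a = ((s : ℝ) + b) + (a - b) := by ring
  rw [hrw, add_div, div_self hne]

lemma betaSet_inj {r : ℕ} {lam : Fin r → ℕ} (hlam : ∀ i j : Fin r, i ≤ j → lam j ≤ lam i) :
    Function.Injective (fun i : Fin r => lam i + (r - 1 - (i : ℕ))) := by
  intro i j h
  simp only at h
  rcases lt_trichotomy i j with hij | hij | hij
  · have h1 := hlam i j hij.le
    have h2 : (i : ℕ) < j := hij
    have h3 : (j : ℕ) < r := j.isLt
    omega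
  · exact hij
  · have h1 := hlam j i hij.le
    have h2 : (j : ℕ) < i := hij
    have h3 : (i : ℕ) < r := i.isLt
    omega

lemma betaSet_card {r : ℕ} {lam : Fin r → ℕ} (hlam : ∀ i j : Fin r, i ≤ j → lam j ≤ lam i) :
    (betaSet r lam).card = r := by
  rw [betaSet, Finset.card_image_of_injective _ (betaSet_inj hlam), Finset.card_univ,
    Fintype.card_fin]

lemma sum_aCount {r t : ℕ} {lam : Fin r → ℕ} (hlam : ∀ i j : Fin r, i ≤ j → lam j ≤ lam i)
    (ht : 0 < t) : ∑ i ∈ range t, aCount r t lam i = r := by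
  have := Finset.card_eq_sum_card_fiberwise
    (f := fun x => x % t) (s := betaSet r lam) (t := range t)
    (fun x _ => mem_range.mpr (Nat.mod_lt _ ht))
  rw [betaSet_card hlam] at this
  exact this.symm

lemma justification_filter {r t : ℕ} (lam : Fin r → ℕ) {i : ℕ} (hi : i < t) :
    ((justification r t lam).filter (fun x => x % t = i))
      = (range (aCount r t lam i)).image (fun m => i + m * t) := by
  ext x
  simp only [justification, mem_filter, mem_biUnion, mem_range, mem_image]
  constructor
  · rintro ⟨⟨j, hj, m, hm, rfl⟩, hmod⟩
    have : (j + m * t) % t = j := by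
      simp [Nat.add_mul_mod_self_right, Nat.mod_eq_of_lt hj]
    rw [this] at hmod
    exact ⟨m, by rw [← hmod]; exact hm, by rw [hmod]⟩
  · rintro ⟨m, hm, rfl⟩
    exact ⟨⟨i, hi, m, hm, rfl⟩, by simp [Nat.add_mul_mod_self_right, Nat.mod_eq_of_lt hi]⟩

lemma justification_card_filter {r t : ℕ} (lam : Fin r → ℕ) {i : ℕ} (hi : i < t) (ht : 0 < t) :
    ((justification r t lam).filter (fun x => x % t = i)).card = aCount r t lam i := by
  rw [justification_filter lam hi, Finset.card_image_of_injective _ (fun a b hab =>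
    Nat.eq_of_mul_eq_mul_right ht (Nat.add_left_cancel hab)), Finset.card_range]

lemma justification_eq_iff {r t : ℕ} (lam mu : Fin r → ℕ) (ht : 0 < t) :
    justification r t lam = justification r t mu ↔
      ∀ i < t, aCount r t lam i = aCount r t mu i := by
  constructor
  · intro h i hi
    rw [← justification_card_filter lam hi ht, ← justification_card_filter mu hi ht, h]
  · intro h
    exact Finset.biUnion_congr rfl (fun i hi => by rw [h i (mem_range.mp hi)])

lemma betaSet_filter_of_core {r t : ℕ} {ρ : Fin r → ℕ} (hcore : IsTCore r t ρ)
    (ht : 0 < t) {i : ℕ} (hi : i < t) :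
    (betaSet r ρ).filter (fun x => x % t = i)
      = (range (aCount r t ρ i)).image (fun m => i + m * t) := by
  set F := (betaSet r ρ).filter (fun x => x % t = i) with hF
  have hinj : Set.InjOn (fun b => b / t) F := by
    intro b1 h1 b2 h2 h
    simp only [hF, mem_coe, mem_filter] at h1 h2
    have e1 := Nat.div_add_mod b1 t
    have e2 := Nat.div_add_mod b2 t
    simp only at h
    rw [← e1, ← e2, h, h1.2, h2.2]
  set G := F.image (fun b => b / t) with hG
  have hGcard : G.card = aCount r t ρ i := by
    rw [hG, Finset.card_image_of_injOn hinj]; rfl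
  have hGpred : ∀ m, m + 1 ∈ G → m ∈ G := by
    intro m hm
    simp only [hG, mem_image, hF, mem_filter] at hm ⊢
    obtain ⟨b, ⟨hbB, hbmod⟩, hbdiv⟩ := hm
    have hmul : t * (m + 1) = t * m + t := by ring
    have hb : b = t * (m + 1) + i := by
      have := Nat.div_add_mod b t
      rw [hbdiv, hbmod] at this
      omega
    have hbt : t ≤ b := by omega
    have hsub : b - t = t * m + i := by omega
    refine ⟨b - t, ⟨hcore b hbB hbt, ?_⟩, ?_⟩
    · rw [hsub, Nat.mul_add_mod, Nat.mod_eq_of_lt hi]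
    · rw [hsub, Nat.mul_add_div ht, Nat.div_eq_of_lt hi, Nat.add_zero]
  have hGrange : G = range (aCount r t ρ i) := by
    rw [← hGcard]; exact lowerset_eq_range G hGpred
  have hFG : F = G.image (fun m => i + m * t) := by
    rw [hG, Finset.image_image]
    have : F.image ((fun m => i + m * t) ∘ (fun b => b / t)) = F.image id :=
      Finset.image_congr (fun b hb => by
        simp only [hF, mem_coe, mem_filter] at hb
        obtain ⟨hb1, hb2⟩ := hb
        have h1 := Nat.div_add_mod b t
        have h2 : b / t * t = t * (b / t) := Nat.mul_comm _ _
        simp only [Function.comp, id]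
        omega)
    rw [this, Finset.image_id]
  rw [hFG, hGrange]

lemma betaSet_eq_justification {r t : ℕ} {ρ : Fin r → ℕ} (hcore : IsTCore r t ρ)
    (ht : 0 < t) : betaSet r ρ = justification r t ρ := by
  have h1 : betaSet r ρ = (range t).biUnion
      (fun i => (betaSet r ρ).filter (fun x => x % t = i)) := by
    ext x
    simp only [mem_biUnion, mem_range, mem_filter]
    constructor
    · intro hx
      exact ⟨x % t, Nat.mod_lt _ ht, hx, rfl⟩
    · rintro ⟨i, _, hx, _⟩
      exact hx
  rw [h1, justification]
  exact Finset.biUnion_congr rfl (fun i hi => betaSet_filter_of_core hcore ht (mem_range.mp hi))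

lemma cond_iff {r t : ℕ} {ρ : Fin r → ℕ} (hcore : IsTCore r t ρ) (ht : 0 < t)
    (lam : Fin r → ℕ) :
    justification r t lam = betaSet r ρ ↔ ∀ i < t, aCount r t lam i = aCount r t ρ i := by
  rw [betaSet_eq_justification hcore ht, justification_eq_iff lam ρ ht]

noncomputable def lamOf (r : ℕ) (B : Finset ℕ) : Fin r → ℕ :=
  if h : B.card = r then fun i => B.orderEmbOfFin h i.rev - (r - 1 - (i : ℕ))
  else fun _ => 0

lemma orderEmb_ge {r : ℕ} {B : Finset ℕ} (h : B.card = r) (k : Fin r) :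
    (k : ℕ) ≤ B.orderEmbOfFin h k := by
  have := strictMono_gap (B.orderEmbOfFin h).strictMono (k : ℕ) ⟨0, k.pos⟩ k (by simp)
  omega

lemma orderEmb_le {r N : ℕ} {B : Finset ℕ} (h : B.card = r) (hB : B ⊆ range N) (k : Fin r) :
    B.orderEmbOfFin h k + (r - 1 - (k : ℕ)) ≤ N - 1 := by
  have hk : (k : ℕ) < r := k.isLt
  have htop : (⟨r - 1, by omega⟩ : Fin r).val = (k : ℕ) + (r - 1 - (k : ℕ)) := by simp; omega
  have h1 := strictMono_gap (B.orderEmbOfFin h).strictMono (r - 1 - (k : ℕ)) k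
    ⟨r - 1, by omega⟩ htop
  have h2 : B.orderEmbOfFin h ⟨r - 1, by omega⟩ ∈ range N := hB (Finset.orderEmbOfFin_mem B h _)
  rw [mem_range] at h2
  omega

lemma betaSet_lamOf {r N : ℕ} {B : Finset ℕ} (h : B.card = r) (hr : 1 ≤ r)
    (hB : B ⊆ range N) : betaSet r (lamOf r B) = B := by
  have hval : ∀ i : Fin r, lamOf r B i + (r - 1 - (i : ℕ)) = B.orderEmbOfFin h i.rev := by
    intro i
    have hgap : (r - 1 - (i : ℕ)) ≤ B.orderEmbOfFin h i.rev := by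
      have := orderEmb_ge h i.rev
      have hrev : (i.rev : ℕ) = r - 1 - (i : ℕ) := by
        rw [Fin.val_rev]; omega
      omega
    rw [lamOf, dif_pos h]
    omega
  have himg : betaSet r (lamOf r B) = Finset.image (fun i : Fin r => B.orderEmbOfFin h i.rev)
      Finset.univ := by
    rw [betaSet]
    exact Finset.image_congr (fun i _ => hval i)
  rw [himg]
  apply Finset.eq_of_subset_of_card_le
  · intro x hx
    rw [mem_image] at hx
    obtain ⟨i, _, rfl⟩ := hx
    exact Finset.orderEmbOfFin_mem B h _
  · have hinj : Function.Injective (fun i : Fin r => B.orderEmbOfFin h i.rev) :=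
      fun a b hab => Fin.rev_injective ((B.orderEmbOfFin h).injective hab)
    rw [Finset.card_image_of_injective _ hinj, Finset.card_univ, Fintype.card_fin, h]

lemma lamOf_betaSet {r : ℕ} {lam : Fin r → ℕ} (hdec : ∀ i j : Fin r, i ≤ j → lam j ≤ lam i) :
    lamOf r (betaSet r lam) = lam := by
  have h : (betaSet r lam).card = r := betaSet_card hdec
  have hf : ∀ k : Fin r, lam k.rev + (k : ℕ) ∈ betaSet r lam := by
    intro k
    rw [betaSet, mem_image]
    refine ⟨k.rev, mem_univ _, ?_⟩
    have h1 : (k.rev : ℕ) = r - 1 - (k : ℕ) := by rw [Fin.val_rev]; omega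
    have h2 : (k : ℕ) < r := k.isLt
    rw [h1]
    congr 1
    omega
  have hmono : StrictMono (fun k : Fin r => lam k.rev + (k : ℕ)) := by
    intro k k' hkk'
    show lam k.rev + (k : ℕ) < lam k'.rev + (k' : ℕ)
    have hrev : k'.rev < k.rev := by
      rw [Fin.lt_def, Fin.val_rev, Fin.val_rev]
      have := k.isLt; have := k'.isLt
      have : (k : ℕ) < k' := hkk'
      omega
    have := hdec k'.rev k.rev hrev.le
    have : (k : ℕ) < k' := hkk'
    omega
  have huniq := Finset.orderEmbOfFin_unique h hf hmono
  funext i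
  rw [lamOf, dif_pos h, ← huniq]
  simp only [Fin.rev_rev]
  have h1 : (i.rev : ℕ) = r - 1 - (i : ℕ) := by rw [Fin.val_rev]; omega
  have h2 : (i : ℕ) < r := i.isLt
  omega

lemma lamOf_dec {r : ℕ} {B : Finset ℕ} (h : B.card = r) (i j : Fin r) (hij : i ≤ j) :
    lamOf r B j ≤ lamOf r B i := by
  simp only [lamOf, dif_pos h]
  have hij' : (i : ℕ) ≤ j := hij
  have hi : (i : ℕ) < r := i.isLt
  have hj : (j : ℕ) < r := j.isLt
  have hrevj : (j.rev : ℕ) = r - 1 - (j : ℕ) := by rw [Fin.val_rev]; omega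
  have hrevi : (i.rev : ℕ) = r - 1 - (i : ℕ) := by rw [Fin.val_rev]; omega
  have hgap := strictMono_gap (B.orderEmbOfFin h).strictMono ((j : ℕ) - (i : ℕ)) j.rev i.rev
    (by omega)
  have hge := orderEmb_ge h j.rev
  omega

lemma lamOf_le {r s : ℕ} {B : Finset ℕ} (h : B.card = r) (hB : B ⊆ range (r + s))
    (i : Fin r) : lamOf r B i ≤ s := by
  simp only [lamOf, dif_pos h]
  have hi : (i : ℕ) < r := i.isLt
  have hrevi : (i.rev : ℕ) = r - 1 - (i : ℕ) := by rw [Fin.val_rev]; omega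
  have hle := orderEmb_le h hB i.rev
  have hge := orderEmb_ge h i.rev
  omega

open scoped Classical in
noncomputable def PF (r s t : ℕ) (a : ℕ → ℕ) : Finset (Fin r → ℕ) :=
  (Fintype.piFinset fun _ : Fin r => range (s + 1)).filter
    (fun lam => IsRectPartition r s lam ∧ ∀ i < t, aCount r t lam i = a i)

open scoped Classical in
noncomputable def SF (r s t : ℕ) (a : ℕ → ℕ) : Finset (Finset ℕ) :=
  ((range (r + s)).powersetCard r).filter
    (fun B => ∀ i < t, (B.filter (fun x => x % t = i)).card = a i)

lemma card_PF_SF (r s t : ℕ) (a : ℕ → ℕ) (hr : 1 ≤ r) :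
    (PF r s t a).card = (SF r s t a).card := by
  classical
  apply Finset.card_nbij' (i := fun lam => betaSet r lam) (j := fun B => lamOf r B)
  · intro lam hlam
    simp only [mem_coe, PF, mem_filter, Fintype.mem_piFinset, mem_range] at hlam
    obtain ⟨hpi, ⟨hdec, hle⟩, hcounts⟩ := hlam
    simp only [mem_coe, SF, mem_filter, mem_powersetCard]
    refine ⟨⟨?_, betaSet_card hdec⟩, ?_⟩
    · intro x hx
      rw [betaSet, mem_image] at hx
      obtain ⟨k, _, rfl⟩ := hx
      rw [mem_range]
      have := hle k
      have : (k : ℕ) < r := k.isLt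
      omega
    · intro i hi
      exact hcounts i hi
  · intro B hB
    simp only [mem_coe, SF, mem_filter, mem_powersetCard] at hB
    obtain ⟨⟨hsub, hcard⟩, hcounts⟩ := hB
    simp only [mem_coe, PF, mem_filter, Fintype.mem_piFinset, mem_range]
    refine ⟨fun i => Nat.lt_succ_of_le (lamOf_le hcard hsub i),
      ⟨fun i j hij => lamOf_dec hcard i j hij, fun i => lamOf_le hcard hsub i⟩, ?_⟩
    intro i hi
    rw [aCount, betaSet_lamOf hcard hr hsub]
    exact hcounts i hi
  · intro lam hlam
    simp only [mem_coe, PF, mem_filter] at hlam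
    exact lamOf_betaSet hlam.2.1.1
  · intro B hB
    simp only [mem_coe, SF, mem_filter, mem_powersetCard] at hB
    exact betaSet_lamOf hB.1.2 hr hB.1.1

open scoped Classical in
noncomputable def TF (r s t : ℕ) (a : ℕ → ℕ) : Finset (Fin t → Finset ℕ) :=
  Fintype.piFinset fun i : Fin t =>
    ((range (r + s)).filter (fun x => x % t = (i : ℕ))).powersetCard (a i)

lemma card_SF_TF (r s t : ℕ) (a : ℕ → ℕ) (ht : 0 < t)
    (ha : ∑ i ∈ range t, a i = r) : (SF r s t a).card = (TF r s t a).card := by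
  classical
  apply Finset.card_nbij' (i := fun B => fun i : Fin t => B.filter (fun x => x % t = (i : ℕ)))
    (j := fun c => Finset.univ.biUnion c)
  · intro B hB
    simp only [mem_coe, SF, mem_filter, mem_powersetCard] at hB
    obtain ⟨⟨hsub, hcard⟩, hcounts⟩ := hB
    simp only [mem_coe, TF, Fintype.mem_piFinset, mem_powersetCard]
    intro i
    constructor
    · intro x hx
      rw [mem_filter] at hx ⊢
      exact ⟨hsub hx.1, hx.2⟩
    · exact hcounts i i.isLt
  · intro c hc
    simp only [mem_coe, TF, Fintype.mem_piFinset, mem_powersetCard] at hc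
    simp only [mem_coe, SF, mem_filter, mem_powersetCard]
    have hmem : ∀ (i : Fin t), ∀ x ∈ c i, x < r + s ∧ x % t = (i : ℕ) := by
      intro i x hx
      have := (hc i).1 hx
      rw [mem_filter, mem_range] at this
      exact this
    have hfil : ∀ i, ∀ hi : i < t, (Finset.univ.biUnion c).filter (fun x => x % t = i) = c ⟨i, hi⟩ := by
      intro i hi
      ext x
      simp only [mem_filter, mem_biUnion, mem_univ, true_and]
      constructor
      · rintro ⟨⟨j, hj⟩, hmod⟩
        have := (hmem j x hj).2
        have hji : j = (⟨i, hi⟩ : Fin t) := Fin.ext (by rw [← this, hmod])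
        rwa [hji] at hj
      · intro hx
        exact ⟨⟨⟨i, hi⟩, hx⟩, (hmem _ x hx).2⟩
    refine ⟨⟨?_, ?_⟩, ?_⟩
    · intro x hx
      rw [mem_biUnion] at hx
      obtain ⟨i, _, hi⟩ := hx
      exact mem_range.mpr (hmem i x hi).1
    · rw [Finset.card_biUnion]
      · rw [← ha]
        rw [← Fin.sum_univ_eq_sum_range (fun i => a i)]
        exact Finset.sum_congr rfl (fun i _ => (hc i).2)
      · intro i _ j _ hij
        rw [Function.onFun, Finset.disjoint_left]
        intro x hxi hxj
        exact hij (Fin.ext (by rw [← (hmem i x hxi).2, ← (hmem j x hxj).2]))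
    · intro i hi
      rw [hfil i hi, (hc _).2]
  · intro B hB
    simp only [mem_coe, SF, mem_filter, mem_powersetCard] at hB
    ext x
    simp only [mem_biUnion, mem_univ, true_and, mem_filter]
    constructor
    · rintro ⟨i, hx, _⟩
      exact hx
    · intro hx
      exact ⟨⟨x % t, Nat.mod_lt _ ht⟩, hx, rfl⟩
  · intro c hc
    simp only [mem_coe, TF, Fintype.mem_piFinset, mem_powersetCard] at hc
    funext i
    ext x
    simp only [mem_filter, mem_biUnion, mem_univ, true_and]
    constructor
    · rintro ⟨⟨j, hj⟩, hmod⟩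
      have hx := (hc j).1 hj
      rw [mem_filter] at hx
      have : j = i := Fin.ext (by rw [← hx.2, hmod])
      rwa [this] at hj
    · intro hx
      have hx' := (hc i).1 hx
      rw [mem_filter] at hx'
      exact ⟨⟨i, hx⟩, hx'.2⟩

lemma card_TF (r s t : ℕ) (a : ℕ → ℕ) (ht : 0 < t) (hts : t ≤ s) :
    (TF r s t a).card = ∏ i ∈ range t, (nres r s t i).choose (a i) := by
  classical
  rw [TF, Fintype.card_piFinset, ← Fin.prod_univ_eq_prod_range]
  apply Finset.prod_congr rfl
  intro i _
  rw [Finset.card_powersetCard, classCard ht i.isLt (by have := i.isLt; omega)]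
  congr 1

lemma choose_real {n k : ℕ} (h : k ≤ n) :
    ((n.choose k : ℝ)) = (∏ j ∈ range k, ((n : ℝ) - j)) / (k.factorial : ℝ) := by
  have h1 : (n.descFactorial k : ℝ) = (k.factorial : ℝ) * (n.choose k : ℝ) := by
    exact_mod_cast congrArg (Nat.cast : ℕ → ℝ) (Nat.descFactorial_eq_factorial_mul_choose n k)
  have h2 : (n.descFactorial k : ℝ) = ∏ j ∈ range k, ((n : ℝ) - j) := by
    rw [Nat.descFactorial_eq_prod_range, Nat.cast_prod]
    exact Finset.prod_congr rfl (fun j hj => Nat.cast_sub (le_trans (mem_range.mp hj).le h))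
  rw [eq_div_iff (by exact_mod_cast k.factorial_ne_zero)]
  rw [← h2, h1]
  ring

lemma nres_eq (r s t i : ℕ) (hi : i < t) : nres r s t i = (s + (r + t - 1 - i)) / t := by
  rw [nres]
  congr 1
  omega

lemma nres_bounds (r s t i : ℕ) (hi : i < t) (ht : 0 < t) :
    t * nres r s t i ≤ s + (r + t - 1 - i) ∧
      s + (r + t - 1 - i) < t * nres r s t i + t := by
  rw [nres_eq r s t i hi]
  constructor
  · exact Nat.mul_div_le _ t
  · have h1 := Nat.lt_mul_div_succ (s + (r + t - 1 - i)) ht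
    have h2 : t * ((s + (r + t - 1 - i)) / t + 1) = t * ((s + (r + t - 1 - i)) / t) + t := by
      ring
    omega

lemma nres_ge (r s t i : ℕ) (hi : i < t) (ht : 0 < t) (hs : t * (r + 1) ≤ s) :
    r + 1 ≤ nres r s t i := by
  rw [nres_eq r s t i hi]
  calc r + 1 = t * (r + 1) / t := by rw [Nat.mul_div_cancel_left _ ht]
  _ ≤ s / t := Nat.div_le_div_right hs
  _ ≤ (s + (r + t - 1 - i)) / t := Nat.div_le_div_right (Nat.le_add_right _ _)

lemma lim_nres (r t i j : ℕ) (hi : i < t) (ht : 0 < t) :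
    Filter.Tendsto (fun s : ℕ => ((nres r s t i : ℝ) - j) / (((r + s : ℕ) : ℝ)))
      Filter.atTop (nhds (1 / t)) := by
  have htR : (0 : ℝ) < t := by exact_mod_cast ht
  set c : ℝ := ((r + t - 1 - i : ℕ) : ℝ) with hc
  have hlo : Filter.Tendsto (fun s : ℕ => (((s : ℝ) + (c - t - j * t)) / t) / ((s : ℝ) + r))
      Filter.atTop (nhds (1 / t)) := by
    have := (lim_ratio (c - t - j * t) r).const_mul (1 / (t : ℝ))
    rw [mul_one] at this
    refine this.congr (fun s => ?_)
    field_simp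
  have hhi : Filter.Tendsto (fun s : ℕ => (((s : ℝ) + (c - j * t)) / t) / ((s : ℝ) + r))
      Filter.atTop (nhds (1 / t)) := by
    have := (lim_ratio (c - j * t) r).const_mul (1 / (t : ℝ))
    rw [mul_one] at this
    refine this.congr (fun s => ?_)
    field_simp
  have hNr : ∀ s : ℕ, (((r + s : ℕ) : ℝ)) = (s : ℝ) + r := by intro s; push_cast; ring
  have hNpos : ∀ s : ℕ, 1 ≤ s → (0 : ℝ) < (s : ℝ) + r := by
    intro s hs
    have : (1 : ℝ) ≤ (s : ℝ) := by exact_mod_cast hs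
    positivity
  apply tendsto_of_tendsto_of_tendsto_of_le_of_le' hlo hhi
  · filter_upwards [Filter.eventually_ge_atTop 1] with s hs
    have hb2 : ((s : ℝ)) + c < t * (nres r s t i : ℝ) + t := by
      rw [hc]
      exact_mod_cast (nres_bounds r s t i hi ht).2
    rw [hNr s]
    rw [div_le_div_iff_of_pos_right (hNpos s hs), div_le_iff₀ htR]
    linarith
  · filter_upwards [Filter.eventually_ge_atTop 1] with s hs
    have hb1 : t * (nres r s t i : ℝ) ≤ ((s : ℝ)) + c := by
      rw [hc]
      exact_mod_cast (nres_bounds r s t i hi ht).1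
    rw [hNr s]
    rw [div_le_div_iff_of_pos_right (hNpos s hs), le_div_iff₀ htR]
    linarith

lemma lim_N_ratio (r j : ℕ) :
    Filter.Tendsto (fun s : ℕ => (((r + s : ℕ) : ℝ)) / ((((r + s : ℕ) : ℝ)) - j))
      Filter.atTop (nhds 1) := by
  refine (lim_ratio (r : ℝ) ((r : ℝ) - j)).congr (fun s => ?_)
  push_cast
  ring_nf

lemma partB (r t : ℕ) (hr : 1 ≤ r) (ht : 2 ≤ t) (a : ℕ → ℕ)
    (hsum : ∑ i ∈ range t, a i = r) :
    Filter.Tendsto (fun s : ℕ =>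
        (∏ i ∈ range t, ((nres r s t i).choose (a i) : ℝ)) / (((r + s).choose r : ℝ)))
      Filter.atTop
      (nhds ((1 / (t : ℝ) ^ r) *
        ((r.factorial : ℝ) / ∏ i ∈ range t, ((a i).factorial : ℝ)))) := by
  have ht0 : 0 < t := by omega
  have htR : (0 : ℝ) < t := by exact_mod_cast ht0
  have haler : ∀ i ∈ range t, a i ≤ r := fun i hi =>
    hsum ▸ Finset.single_le_sum (fun _ _ => Nat.zero_le _) hi
  set C : ℝ := (r.factorial : ℝ) / ∏ i ∈ range t, ((a i).factorial : ℝ) with hC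
  set g : ℕ → ℝ := fun s =>
    (∏ i ∈ range t, ∏ j ∈ range (a i),
        (((nres r s t i : ℝ)) - j) / (((r + s : ℕ) : ℝ))) *
      (∏ j ∈ range r, (((r + s : ℕ) : ℝ)) / ((((r + s : ℕ) : ℝ)) - j)) with hg
  have h1 : Filter.Tendsto (fun s : ℕ => ∏ i ∈ range t, ∏ j ∈ range (a i),
      (((nres r s t i : ℝ)) - j) / (((r + s : ℕ) : ℝ))) Filter.atTop
      (nhds (∏ i ∈ range t, ∏ j ∈ range (a i), (1 / (t : ℝ)))) :=
    tendsto_finset_prod _ (fun i hi =>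
      tendsto_finset_prod _ (fun j _ => lim_nres r t i j (mem_range.mp hi) ht0))
  have hval : (∏ i ∈ range t, ∏ j ∈ range (a i), (1 / (t : ℝ))) = 1 / (t : ℝ) ^ r := by
    simp only [prod_const, card_range]
    rw [Finset.prod_pow_eq_pow_sum, hsum, div_pow, one_pow]
  have h2 : Filter.Tendsto (fun s : ℕ => ∏ j ∈ range r,
      (((r + s : ℕ) : ℝ)) / ((((r + s : ℕ) : ℝ)) - j)) Filter.atTop (nhds 1) := by
    have := tendsto_finset_prod (range r) (f := fun (j : ℕ) (s : ℕ) =>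
      (((r + s : ℕ) : ℝ)) / ((((r + s : ℕ) : ℝ)) - j)) (a := fun _ => (1 : ℝ))
      (fun j _ => lim_N_ratio r j)
    simpa using this
  have hglim : Filter.Tendsto g Filter.atTop (nhds (1 / (t : ℝ) ^ r)) := by
    have := h1.mul h2
    rw [hval, mul_one] at this
    exact this
  have hfinal := hglim.const_mul C
  rw [mul_comm] at hfinal
  refine Filter.Tendsto.congr' ?_ ((mul_comm ((1:ℝ) / (t:ℝ)^r) C ▸ hglim.const_mul C) : _)
  · filter_upwards [Filter.eventually_ge_atTop (t * (r + 1))] with s hs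
    have hnge : ∀ i ∈ range t, a i ≤ nres r s t i := fun i hi =>
      le_trans (haler i hi) (le_trans (Nat.le_succ r) (nres_ge r s t i (mem_range.mp hi) ht0 hs))
    set N : ℝ := ((r + s : ℕ) : ℝ) with hN
    have hNpos : (0 : ℝ) < N := by
      rw [hN]
      exact_mod_cast Nat.lt_of_lt_of_le hr (Nat.le_add_right r s)
    set P : ℕ → ℝ := fun i => ∏ j ∈ range (a i), ((nres r s t i : ℝ) - j) with hP
    set Q : ℝ := ∏ j ∈ range r, (N - j) with hQ
    have hQpos : (0 : ℝ) < Q := by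
      rw [hQ]
      apply Finset.prod_pos
      intro j hj
      have hjr : j < r := mem_range.mp hj
      have : (j : ℝ) < N := by
        rw [hN]
        exact_mod_cast Nat.lt_of_lt_of_le hjr (Nat.le_add_right r s)
      linarith
    have hnum : (∏ i ∈ range t, ((nres r s t i).choose (a i) : ℝ))
        = (∏ i ∈ range t, P i) / (∏ i ∈ range t, ((a i).factorial : ℝ)) := by
      rw [← Finset.prod_div_distrib]
      exact Finset.prod_congr rfl (fun i hi => choose_real (hnge i hi))
    have hden : (((r + s).choose r : ℝ)) = Q / (r.factorial : ℝ) := by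
      rw [choose_real (Nat.le_add_right r s), hQ, hN]
    have hinner : ∀ i ∈ range t, (∏ j ∈ range (a i), ((nres r s t i : ℝ) - j) / N)
        = P i / N ^ (a i) := by
      intro i _
      rw [Finset.prod_div_distrib, Finset.prod_const, card_range, hP]
    have hgs : g s = (∏ i ∈ range t, P i) / N ^ r * (N ^ r / Q) := by
      rw [hg]
      simp only
      rw [Finset.prod_congr rfl hinner, Finset.prod_div_distrib,
        Finset.prod_div_distrib, Finset.prod_const, card_range,
        Finset.prod_pow_eq_pow_sum, hsum]
    have hfa : (∏ i ∈ range t, ((a i).factorial : ℝ)) ≠ 0 :=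
      Finset.prod_ne_zero_iff.mpr (fun i _ => by exact_mod_cast (a i).factorial_ne_zero)
    have hfr : ((r.factorial : ℝ)) ≠ 0 := by exact_mod_cast r.factorial_ne_zero
    show C * g s = _
    rw [hgs, hnum, hden, hC]
    field_simp
  done

lemma ncard_eq (r s t : ℕ) (ρ : Fin r → ℕ) (hr : 1 ≤ r) (ht0 : 0 < t)
    (hρdec : ∀ i j : Fin r, i ≤ j → ρ j ≤ ρ i) (hcore : IsTCore r t ρ) (hts : t ≤ s) :
    {lam : Fin r → ℕ | IsRectPartition r s lam ∧
        justification r t lam = betaSet r ρ}.ncard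
      = ∏ i ∈ range t, (nres r s t i).choose (aCount r t ρ i) := by
  classical
  have hset : {lam : Fin r → ℕ | IsRectPartition r s lam ∧
      justification r t lam = betaSet r ρ} = ↑(PF r s t (aCount r t ρ)) := by
    ext lam
    simp only [Set.mem_setOf_eq, mem_coe, PF, mem_filter, Fintype.mem_piFinset, mem_range]
    constructor
    · rintro ⟨hpart, hjust⟩
      exact ⟨fun i => Nat.lt_succ_of_le (hpart.2 i), hpart,
        (cond_iff hcore ht0 lam).mp hjust⟩
    · rintro ⟨_, hpart, hcounts⟩
      exact ⟨hpart, (cond_iff hcore ht0 lam).mpr hcounts⟩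
  rw [hset, Set.ncard_coe_finset, card_PF_SF r s t _ hr,
    card_SF_TF r s t _ ht0 (sum_aCount hρdec ht0), card_TF r s t _ ht0 hts]


/-- For a fixed `t`-core `ρ ∈ Par_{r,rt}`, as `s → ∞`,
`#{λ ∈ Par_{r,s} : core_t(λ) = ρ} / C(r+s, r) → (1/t^r) · r!/(a_0! ⋯ a_{t−1}!)`.
Here `core_t(λ) = ρ` is expressed as `J(λ) = β(ρ)`. -/
theorem fixed_core_probability_limit (r t : ℕ) (hr : 1 ≤ r) (ht : 2 ≤ t)
    (ρ : Fin r → ℕ) (hρ : IsRectPartition r (r * t) ρ) (hcore : IsTCore r t ρ) :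
    Filter.Tendsto
      (fun s : ℕ => ({lam : Fin r → ℕ | IsRectPartition r s lam ∧
          justification r t lam = betaSet r ρ}.ncard : ℝ) / ((r + s).choose r : ℝ))
      Filter.atTop
      (nhds ((1 / (t : ℝ) ^ r) *
        ((r.factorial : ℝ) / ∏ i ∈ Finset.range t, ((aCount r t ρ i).factorial : ℝ)))) := by
  have ht0 : 0 < t := by omega
  refine Filter.Tendsto.congr' ?_
    (partB r t hr ht (aCount r t ρ) (sum_aCount hρ.1 ht0))
  filter_upwards [Filter.eventually_ge_atTop t] with s hs
  rw [ncard_eq r s t ρ hr ht0 hρ.1 hcore hs, Nat.cast_prod]
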